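/- For every (t,s) ∈ S with (t,s) ≠ (0,0) there exists a unique λ > 0 such that (t/λ, s/λ) lies on the curve Γ_g; that is, every ray from the origin contained in the cone S meets the graph of g in exactly one point. In particular there is a well-defined function F : S ∖ {0} → (0,∞) which is positively homogeneous of degree one and identically 1 on Γ_g. -/

import Mathlib

open Real Set

noncomputable def gfun (t : ℝ) : ℝ := (Real.sqrt (1 - t^2) - t * Real.arccos t) / Real.pi

def Scone : Set (ℝ × ℝ) := {p | max 0 (-p.1) ≤ p.2}

lemma gfun_cont : Continuous gfun := by
  unfold gfun
  exact ((Real.continuous_sqrt.comp (by continuity)).sub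
    (continuous_id.mul Real.continuous_arccos)).div_const _

lemma hasDerivAt_gfun {u : ℝ} (h1 : -1 < u) (h2 : u < 1) :
    HasDerivAt gfun (-Real.arccos u / Real.pi) u := by
  have hu2 : (0:ℝ) < 1 - u^2 := by nlinarith
  have hs : Real.sqrt (1 - u^2) ≠ 0 := by positivity
  have hsq : HasDerivAt (fun t : ℝ => Real.sqrt (1 - t^2))
      (1 / (2 * Real.sqrt (1 - u^2)) * (-2*u)) u := by
    have hinner : HasDerivAt (fun t : ℝ => 1 - t^2) (-2*u) u := by
      simpa using ((hasDerivAt_pow 2 u).const_sub 1)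
    exact (Real.hasDerivAt_sqrt (ne_of_gt hu2)).comp u hinner
  have harc : HasDerivAt (fun t : ℝ => t * Real.arccos t)
      (1 * Real.arccos u + u * (-(1 / Real.sqrt (1 - u^2)))) u :=
    (hasDerivAt_id u).mul (Real.hasDerivAt_arccos (by linarith) (by linarith))
  have := (hsq.sub harc).div_const Real.pi
  refine this.congr_deriv ?_
  field_simp
  ring

lemma hasDerivAt_persp {t lam : ℝ} (h : |t| < lam) :
    HasDerivAt (fun x => x * gfun (t / x)) (Real.sqrt (1 - (t/lam)^2) / Real.pi) lam := by
  have hlam : (0:ℝ) < lam := lt_of_le_of_lt (abs_nonneg t) h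
  have hlam0 : lam ≠ 0 := ne_of_gt hlam
  have hu1 : -1 < t / lam := by
    rw [neg_lt, ← neg_div, div_lt_one hlam]; calc -t ≤ |t| := neg_le_abs t
    _ < lam := h
  have hu2 : t / lam < 1 := by
    rw [div_lt_one hlam]; exact lt_of_le_of_lt (le_abs_self t) h
  have hinner : HasDerivAt (fun x : ℝ => t / x) (-t / lam^2) lam := by
    simpa [div_eq_mul_inv, sq] using ((hasDerivAt_inv hlam0).const_mul t)
  have hcomp : HasDerivAt (fun x : ℝ => gfun (t / x))
      (-Real.arccos (t/lam) / Real.pi * (-t / lam^2)) lam :=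
    (hasDerivAt_gfun hu1 hu2).comp lam hinner
  have := (hasDerivAt_id lam).mul hcomp
  refine this.congr_deriv ?_
  have hnum : Real.sqrt (1 - (t/lam)^2)
      = gfun (t/lam) * Real.pi + (t/lam) * Real.arccos (t/lam) := by
    unfold gfun; field_simp; ring
  rw [eq_div_iff Real.pi_ne_zero, hnum]
  field_simp
  simp only [id]
  ring

lemma gfun_one : gfun 1 = 0 := by
  unfold gfun; simp [Real.arccos_one]

lemma gfun_neg_one : gfun (-1) = 1 := by
  unfold gfun
  rw [Real.arccos_neg_one]
  norm_num

lemma gfun_zero : gfun 0 = 1 / Real.pi := by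
  unfold gfun; simp

lemma gfun_lower {u : ℝ} (hu : |u| ≤ 1) : (1 - (1 + Real.pi) * |u|) / Real.pi ≤ gfun u := by
  have h1 : 1 - |u| ≤ Real.sqrt (1 - u^2) := by
    rcases le_or_gt (1 - |u|) 0 with h | h
    · exact le_trans h (Real.sqrt_nonneg _)
    · nlinarith [Real.sq_sqrt (by nlinarith [sq_abs u, abs_nonneg u] : (0:ℝ) ≤ 1 - u^2),
        Real.sqrt_nonneg (1 - u^2), abs_nonneg u, sq_abs u]
  have h2 : u * Real.arccos u ≤ |u| * Real.pi := by
    calc u * Real.arccos u ≤ |u * Real.arccos u| := le_abs_self _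
    _ = |u| * |Real.arccos u| := abs_mul _ _
    _ ≤ |u| * Real.pi := by
        apply mul_le_mul_of_nonneg_left _ (abs_nonneg u)
        rw [abs_of_nonneg (Real.arccos_nonneg u)]
        exact Real.arccos_le_pi u
  unfold gfun
  gcongr ?_ / π
  linarith

lemma persp_strictMono {t : ℝ} (ht : t ≠ 0) :
    StrictMonoOn (fun x => x * gfun (t / x)) (Ici |t|) := by
  have ha : (0:ℝ) < |t| := abs_pos.2 ht
  apply strictMonoOn_of_deriv_pos (convex_Ici _)
  · apply continuousOn_id.mul
    apply gfun_cont.comp_continuousOn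
    exact continuousOn_const.div continuousOn_id
      (fun x hx => ne_of_gt (lt_of_lt_of_le ha hx))
  · intro x hx
    rw [interior_Ici] at hx
    rw [(hasDerivAt_persp hx).deriv]
    have hx0 : (0:ℝ) < x := lt_trans ha hx
    have : |t / x| < 1 := by
      rw [abs_div, abs_of_pos hx0, div_lt_one hx0]; exact hx
    have h2 : (t/x)^2 < 1 := by nlinarith [abs_nonneg (t/x), sq_abs (t/x)]
    have : (0:ℝ) < Real.sqrt (1 - (t/x)^2) := Real.sqrt_pos.2 (by linarith)
    positivity

lemma rays_part1 : ∀ p : ℝ × ℝ, p ∈ Scone → p ≠ 0 →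
    ∃! lam : ℝ, 0 < lam ∧ -1 ≤ p.1 / lam ∧ p.1 / lam ≤ 1 ∧ p.2 / lam = gfun (p.1 / lam) := by
  rintro ⟨t, s⟩ hp hp0
  rw [Scone, mem_setOf_eq, max_le_iff] at hp
  obtain ⟨hs0, hst⟩ := hp
  rw [Ne, Prod.mk_eq_zero, not_and_or] at hp0
  by_cases ht : t = 0
  · subst ht
    have hs : 0 < s := lt_of_le_of_ne hs0 (by tauto)
    refine ⟨Real.pi * s, ⟨by positivity, by norm_num, by norm_num, ?_⟩, ?_⟩
    · rw [zero_div, gfun_zero]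
      rw [div_eq_div_iff (by positivity) Real.pi_ne_zero]
      ring
    · rintro y ⟨hy0, -, -, hy⟩
      rw [zero_div, gfun_zero] at hy
      field_simp at hy
      linarith
  · have ha : (0:ℝ) < |t| := abs_pos.2 ht
    set h : ℝ → ℝ := fun x => x * gfun (t / x) with hdef
    have hcont : ContinuousOn h (Icc |t| (Real.pi * (s + 2 * |t|))) := by
      apply continuousOn_id.mul
      apply gfun_cont.comp_continuousOn
      exact continuousOn_const.div continuousOn_id
        (fun x hx => ne_of_gt (lt_of_lt_of_le ha hx.1))
    have hha : h |t| = max 0 (-t) := by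
      rcases lt_or_gt_of_ne ht with h1 | h1
      · rw [hdef]
        simp only [abs_of_neg h1]
        rw [div_neg, div_self ht, gfun_neg_one]
        rw [max_eq_right (by linarith : (0:ℝ) ≤ -t)]
        ring
      · rw [hdef]
        simp only [abs_of_pos h1]
        rw [div_self ht, gfun_one]
        rw [max_eq_left (by linarith : -t ≤ (0:ℝ))]
        ring
    set M : ℝ := Real.pi * (s + 2 * |t|) with hMdef
    have hM0 : 0 < M := by positivity
    have haM : |t| ≤ M := by nlinarith [Real.pi_gt_three]
    have huM : |t / M| ≤ 1 := by
      rw [abs_div, abs_of_pos hM0, div_le_one hM0]; exact haM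
    have hhM : s ≤ h M := by
      have hb := gfun_lower huM
      have h1 : M * ((1 - (1 + Real.pi) * |t/M|) / Real.pi) ≤ h M :=
        mul_le_mul_of_nonneg_left hb (le_of_lt hM0)
      have h2 : M * ((1 - (1 + Real.pi) * |t/M|) / Real.pi) = (M - (1 + Real.pi) * |t|) / Real.pi := by
        rw [abs_div, abs_of_pos hM0]
        field_simp
      rw [h2] at h1
      refine le_trans ?_ h1
      rw [le_div_iff₀ Real.pi_pos, hMdef]
      nlinarith [Real.pi_gt_three]
    have hmem : s ∈ Icc (h |t|) (h M) := ⟨by rw [hha]; exact max_le hs0 hst, hhM⟩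
    obtain ⟨lam, hlamI, hlams⟩ := intermediate_value_Icc haM hcont hmem
    have hlam0 : 0 < lam := lt_of_lt_of_le ha hlamI.1
    have hlamne : lam ≠ 0 := ne_of_gt hlam0
    have habs : |t / lam| ≤ 1 := by
      rw [abs_div, abs_of_pos hlam0, div_le_one hlam0]; exact hlamI.1
    refine ⟨lam, ⟨hlam0, (abs_le.1 habs).1, (abs_le.1 habs).2, ?_⟩, ?_⟩
    · rw [div_eq_iff hlamne, ← hlams]; ring
    · rintro y ⟨hy0, hy1, hy2, hy3⟩
      have hyI : |t| ≤ y := by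
        rw [← div_le_one hy0, ← abs_of_pos hy0, ← abs_div]
        exact abs_le.2 ⟨hy1, hy2⟩
      have hys : h y = s := by
        rw [hdef]
        simp only
        rw [← hy3]
        field_simp
      exact (persp_strictMono ht).injOn hyI hlamI.1 (hys.trans hlams.symm)

theorem rays_meet_graph_once :
    (∀ p : ℝ × ℝ, p ∈ Scone → p ≠ 0 →
      ∃! lam : ℝ, 0 < lam ∧ -1 ≤ p.1 / lam ∧ p.1 / lam ≤ 1 ∧ p.2 / lam = gfun (p.1 / lam)) ∧
    ∃ F : ℝ × ℝ → ℝ,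
      (∀ p ∈ Scone \ {(0 : ℝ × ℝ)}, 0 < F p) ∧
      (∀ p ∈ Scone \ {(0 : ℝ × ℝ)}, ∀ c : ℝ, 0 < c → F (c • p) = c * F p) ∧
      (∀ u : ℝ, -1 ≤ u → u ≤ 1 → F (u, gfun u) = 1) := by
  classical
  refine ⟨rays_part1, ?_⟩
  set P : ℝ × ℝ → ℝ → Prop := fun p lam =>
    0 < lam ∧ -1 ≤ p.1 / lam ∧ p.1 / lam ≤ 1 ∧ p.2 / lam = gfun (p.1 / lam) with hP
  refine ⟨fun p => if h : ∃! lam, P p lam then h.choose else 1, ?_, ?_, ?_⟩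
  · intro p hp
    have hex : ∃! lam, P p lam := rays_part1 p hp.1 (by simpa using hp.2)
    beta_reduce
    rw [dif_pos hex]
    exact hex.choose_spec.1.1
  · intro p hp c hc
    have hp' : p ∈ Scone := hp.1
    have hp0 : p ≠ 0 := by simpa using hp.2
    have hex : ∃! lam, P p lam := rays_part1 p hp' hp0
    have hcp : c • p ∈ Scone := by
      rw [Scone, mem_setOf_eq] at hp' ⊢
      rw [max_le_iff] at hp' ⊢
      simp only [Prod.smul_fst, Prod.smul_snd, smul_eq_mul]
      constructor
      · nlinarith [hp'.1]
      · nlinarith [hp'.2]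
    have hcp0 : c • p ≠ 0 := by
      intro hz
      rcases smul_eq_zero.1 hz with h | h
      · exact absurd h (ne_of_gt hc)
      · exact hp0 h
    have hex' : ∃! lam, P (c • p) lam := rays_part1 (c • p) hcp hcp0
    beta_reduce
    rw [dif_pos hex', dif_pos hex]
    have hspec := hex.choose_spec.1
    have hkey1 : (c • p).1 / (c * hex.choose) = p.1 / hex.choose := by
      simp only [Prod.smul_fst, smul_eq_mul]
      rw [mul_div_mul_left _ _ (ne_of_gt hc)]
    have hkey2 : (c • p).2 / (c * hex.choose) = p.2 / hex.choose := by
      simp only [Prod.smul_snd, smul_eq_mul]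
      rw [mul_div_mul_left _ _ (ne_of_gt hc)]
    have hprop : P (c • p) (c * hex.choose) := by
      refine ⟨mul_pos hc hspec.1, ?_, ?_, ?_⟩
      · rw [hkey1]; exact hspec.2.1
      · rw [hkey1]; exact hspec.2.2.1
      · rw [hkey2, hkey1]; exact hspec.2.2.2
    exact (hex'.choose_spec.2 (c * hex.choose) hprop).symm
  · intro u hu1 hu2
    by_cases hex : ∃! lam, P (u, gfun u) lam
    · beta_reduce
      rw [dif_pos hex]
      refine (hex.choose_spec.2 1 ?_).symm
      refine ⟨one_pos, ?_, ?_, ?_⟩ <;> simp [hu1, hu2]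
    · beta_reduce
      rw [dif_neg hex]
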